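/- arXiv:math/0112287 — 2 statements merged into one kernel-verified Lean document; each statement's English description precedes it below -/
import Mathlib

section
/- Suppose c = (i, η*, R) satisfies all clauses of the definition of a simple i-creature except possibly clause (d) (so: the kind/base conditions hold, R is a nonempty subset of {η ∈ spec_{n_{3,i}} : η* ⊆ η and |dom(η)| < n_{2,i}} with |R| < n_{1,i}), and suppose norm⁰(c) > 0, where norm⁰ is computed from R by the same formula as for simple creatures. Then c satisfies clause (d): for every η₁ ∈ R and every x ∈ dom(η₁) ∖ dom(η*) there is η₂ ∈ R such that if x ∈ dom(η₂) then η₁(x) ≠ η₂(x). Hence c is a simple i-creature. -/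
open Classical Set

noncomputable section

/-- Finite partial functions from ordinals to `ℕ`, encoded as `Option`-valued functions. -/
abbrev PF := Ordinal → Option ℕ

/-- The domain of a partial function. -/
def pdom (η : PF) : Set Ordinal := {x | η x ≠ none}

/-- `η` is a subfunction of `ν`. -/
def pfsub (η ν : PF) : Prop := ∀ x v, η x = some v → ν x = some v

/-- `η` and `ν` are compatible partial functions. -/
def pfcompat (η ν : PF) : Prop := ∀ x a b, η x = some a → ν x = some b → a = b

/-- The union of two partial functions (left side has priority). -/
def punion (η ν : PF) : PF := fun x => match η x with | some v => some v | none => ν x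

/-- The empty partial function. -/
def emptyPF : PF := fun _ => none

/-- The first uncountable ordinal. -/
def omega1 : Ordinal := (Cardinal.aleph 1).ord

/-- An Aronszajn tree: a tree of height `ω₁`, with countable levels, no uncountable
branch, whose underlying set consists of countable ordinals and whose `α`-th level is
contained in `[ω·α, ω·α + ω)`; thus the level of a node `x` is `x / ω`. -/
structure ATree where
  mem : Set Ordinal
  lt : Ordinal → Ordinal → Prop
  mem_lt_omega1 : ∀ x ∈ mem, x < omega1
  lt_mem : ∀ {x y}, lt x y → x ∈ mem ∧ y ∈ mem
  lt_trans : ∀ {x y z}, lt x y → lt y z → lt x z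
  lt_level : ∀ {x y}, lt x y → x / Ordinal.omega0 < y / Ordinal.omega0
  preds_linear : ∀ z ∈ mem, ∀ {x y}, lt x z → lt y z → (lt x y ∨ x = y ∨ lt y x)
  preds_full : ∀ z ∈ mem, ∀ β < z / Ordinal.omega0, ∃ x, lt x z ∧ x / Ordinal.omega0 = β
  height : ∀ α < omega1, ∃ x ∈ mem, x / Ordinal.omega0 = α
  aronszajn : ∀ C : Set Ordinal, C ⊆ mem → IsChain lt C → C.Countable

/-- `(T_A)_{<α}`: the union of the levels below `α`. -/
def below (T : ATree) (α : Ordinal) : Set Ordinal := {x | x ∈ T.mem ∧ x / Ordinal.omega0 < α}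

/-- A branch of `T_A`: a maximal chain. -/
def Branch (T : ATree) (B : Set Ordinal) : Prop :=
  B ⊆ T.mem ∧ IsChain T.lt B ∧ ∀ C, B ⊆ C → C ⊆ T.mem → IsChain T.lt C → B = C

/-- `x` and `y` are `<_{T_A}`-incomparable. -/
def Incomp (T : ATree) (x y : Ordinal) : Prop := ¬ T.lt x y ∧ ¬ T.lt y x

/-- `spec_n`: finite partial specialization functions with values `< n`. -/
def specn (T : ATree) (n : ℕ) (η : PF) : Prop :=
  pdom η ⊆ T.mem ∧ (pdom η).Finite ∧ (∀ x v, η x = some v → v < n) ∧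
  ∀ x y v, η x = some v → η y = some v → x ≠ y → Incomp T x y

/-- `spec`: finite partial specialization functions. -/
def spec (T : ATree) (η : PF) : Prop := ∃ n, specn T n η

/-- The growth conditions on the three fixed sequences of natural numbers. -/
def SeqOK (n1 n2 n3 : ℕ → ℕ) : Prop :=
  ∀ i, i * n1 i < n3 i ∧ n2 i < n1 (i + 1) ∧ n1 i * n1 i ≤ n1 (i + 1) ∧ n1 i ≤ n2 i

/-- The conditions on the kind `i` and the base of a simple creature. -/
def BaseOK (T : ATree) (n2 n3 : ℕ → ℕ) (i : ℕ) (base : PF) : Prop :=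
  spec T base ∧
  ((base = emptyPF ∧ i = 0) ∨
    ((pdom base).ncard ≤ n2 (i - 1) ∧ (∀ j, j < i → ¬ (pdom base).ncard ≤ n2 (j - 1)) ∧
      specn T (n3 (i - 1)) base))

/-- The conditions on `rge(val(c))` of a simple `i`-creature with base `base`. -/
def ValOK (T : ATree) (n1 n2 n3 : ℕ → ℕ) (i : ℕ) (base : PF) (R : Set PF) : Prop :=
  R.Nonempty ∧ R.Finite ∧
  (∀ η ∈ R, specn T (n3 i) η ∧ pfsub base η ∧ (pdom η).ncard < n2 i) ∧
  R.ncard < n1 i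

/-- Clause (d) of the definition of a simple creature. -/
def ClauseD (base : PF) (R : Set PF) : Prop :=
  ∀ η₁ ∈ R, ∀ x, x ∈ pdom η₁ → x ∉ pdom base →
    ∃ η₂ ∈ R, ∀ v₁ v₂, η₁ x = some v₁ → η₂ x = some v₂ → v₁ ≠ v₂

/-- A simple `i`-creature with base `base` and `rge(val) = R`. -/
def SCr (T : ATree) (n1 n2 n3 : ℕ → ℕ) (i : ℕ) (base : PF) (R : Set PF) : Prop :=
  BaseOK T n2 n3 i base ∧ ValOK T n1 n2 n3 i base R ∧ ClauseD base R

/-- The property of `k` whose maximum is `norm⁰`. -/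
def Norm0P (T : ATree) (n2 n3 : ℕ → ℕ) (i : ℕ) (base : PF) (R : Set PF) (k : ℕ) : Prop :=
  ∀ a : Finset ℕ, (∀ v ∈ a, v < n3 i) → a.card ≤ k →
    ∀ B : Fin k → Set Ordinal, (∀ l, Branch T (B l)) →
      ∃ η ∈ R,
        (∀ x, (∃ l, x ∈ B l) → x ∈ pdom η → x ∉ pdom base →
          ∀ v, η x = some v → v ∉ a) ∧
        (pdom η).ncard * 2 ^ k ≤ n2 i

/-- `norm⁰`: the maximal `k` satisfying `Norm0P`. -/
def norm0 (T : ATree) (n2 n3 : ℕ → ℕ) (i : ℕ) (base : PF) (R : Set PF) : ℕ :=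
  sSup {k | Norm0P T n2 n3 i base R k}

/-- Ceiling of the base-2 logarithm (with `log₂ x = 0` for `x ≤ 1`, in particular `log₂ 0 = 0`). -/
def log2c (x : ℝ) : ℕ := ⌈Real.logb 2 x⌉₊

/-- `norm*(c) = log₂(n_{1,i}/|rge(val(c))|)`. -/
def normStar (n1 : ℕ → ℕ) (i : ℕ) (R : Set PF) : ℕ :=
  log2c ((n1 i : ℝ) / (R.ncard : ℝ))

/-- `norm^{1/2}(c) = min(norm⁰(c), norm*(c))`. -/
def normHalf (T : ATree) (n1 n2 n3 : ℕ → ℕ) (i : ℕ) (base : PF) (R : Set PF) : ℕ :=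
  min (norm0 T n2 n3 i base R) (normStar n1 i R)

/-- `norm¹(c) = log₂(norm⁰(c))`. -/
def norm1 (T : ATree) (n2 n3 : ℕ → ℕ) (i : ℕ) (base : PF) (R : Set PF) : ℕ :=
  log2c ((norm0 T n2 n3 i base R : ℝ))

/-- `norm²(c) = log₂(norm^{1/2}(c))`. -/
def norm2 (T : ATree) (n1 n2 n3 : ℕ → ℕ) (i : ℕ) (base : PF) (R : Set PF) : ℕ :=
  log2c ((normHalf T n1 n2 n3 i base R : ℝ))

/-- The properties required of the two-place function `f` used to define norms of creatures. -/
def FOK (f : ℕ → ℕ → ℝ) : Prop :=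
  (∀ n k, 0 ≤ f n k) ∧
  (∀ n₁ n₂ k₁ k₂, n₂ ≤ n₁ → k₂ ≤ n₂ → k₁ ≤ k₂ → f n₂ k₂ ≤ f n₁ k₁) ∧
  (∀ n k, f n k - 1 ≤ f (n / 2) k) ∧
  (∀ n k, n ≤ k → f n k = 0) ∧
  (∀ n k, 1 ≤ f n k → ∃ k', k < k' ∧ k' < n ∧ ∀ n', k' < n' → n' < n →
    f n' k = f n' k' + f k' k ∧ f n k - 1 ≤ f n' k)

/-- A candidate forcing condition: a set of partial specialization functions
together with a tree order and the `k`-components of the creatures. -/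
structure QCond where
  dom : Set PF
  tlt : PF → PF → Prop
  bval : PF → ℕ

/-- The level of a node: the number of its `◁`-predecessors. -/
def plev (p : QCond) (η : PF) : ℕ := ({ν | p.tlt ν η}).ncard

/-- `p^[ℓ]`: the `ℓ`-th level of `p`. -/
def plevel (p : QCond) (ℓ : ℕ) : Set PF := {η | η ∈ p.dom ∧ plev p η = ℓ}

/-- `suc_p(η)`: the successors of `η` in `p`. -/
def sucSet (p : QCond) (η : PF) : Set PF :=
  {ν | ν ∈ plevel p (plev p η + 1) ∧ pfsub η ν}

/-- `i(p)`: the minimal `i` such that `|dom(rt(p))| ≤ n_{2,i-1}`. -/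
def idx (n2 : ℕ → ℕ) (p : QCond) : ℕ :=
  sInf {i | ∀ r ∈ plevel p 0, (pdom r).ncard ≤ n2 (i - 1)}

/-- An `ω`-branch of `p^[]`. -/
def OBranch (p : QCond) (b : ℕ → PF) : Prop :=
  ∀ ℓ, b ℓ ∈ plevel p ℓ ∧ p.tlt (b ℓ) (b (ℓ + 1))

/-- `norm(c⁺_{p,η}) = f(norm^{1/2}(c_{p,η}), p(η))`. -/
def pnorm (T : ATree) (n1 n2 n3 : ℕ → ℕ) (f : ℕ → ℕ → ℝ) (p : QCond) (η : PF) : ℝ :=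
  f (normHalf T n1 n2 n3 (idx n2 p + plev p η) η (sucSet p η)) (p.bval η)

/-- Membership in the forcing notion `Q = Q_{T_A}`. -/
def InQ (T : ATree) (n1 n2 n3 : ℕ → ℕ) (f : ℕ → ℕ → ℝ) (p : QCond) : Prop :=
  (∀ η ∈ p.dom, spec T η) ∧
  (∀ {x y}, p.tlt x y → x ∈ p.dom ∧ y ∈ p.dom) ∧
  (∀ {x y z}, p.tlt x y → p.tlt y z → p.tlt x z) ∧
  (∀ {x y}, p.tlt x y → pfsub x y ∧ x ≠ y) ∧
  (∀ y ∈ p.dom, ({x | p.tlt x y}).Finite) ∧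
  (∀ y ∈ p.dom, ∀ {x₁ x₂}, p.tlt x₁ y → p.tlt x₂ y →
    (p.tlt x₁ x₂ ∨ x₁ = x₂ ∨ p.tlt x₂ x₁)) ∧
  (∃ r ∈ p.dom, ∀ η ∈ p.dom, η = r ∨ p.tlt r η) ∧
  (∀ ℓ, ∀ η ∈ plevel p ℓ,
    SCr T n1 n2 n3 (idx n2 p + ℓ) η (sucSet p η) ∧
    p.bval η ≤ normHalf T n1 n2 n3 (idx n2 p + ℓ) η (sucSet p η)) ∧
  (∀ η ∈ p.dom, ∀ ν ∈ p.dom, pfcompat η ν → spec T (punion η ν) → punion η ν ∈ p.dom) ∧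
  (∃ k, ∀ η ∈ plevel p k, ∃ α, α < omega1 ∧ ∃ u : Set Ordinal, u.Finite ∧
    u ⊆ T.mem \ below T α ∧
    ∀ b : ℕ → PF, OBranch p b → b k = η → (⋃ ℓ, pdom (b ℓ)) \ u = below T α) ∧
  (∀ b : ℕ → PF, OBranch p b →
    Filter.Tendsto (fun ℓ => pnorm T n1 n2 n3 f p (b ℓ)) Filter.atTop Filter.atTop)

/-- Clauses (a)-(f): `pr` is a projection witnessing `p ≤_Q q`. -/
def Proj (n2 : ℕ → ℕ) (p q : QCond) (pr : PF → PF) : Prop :=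
  (∀ η ∈ q.dom, pr η ∈ p.dom) ∧
  (∀ ℓ, ∀ η ∈ plevel q ℓ, pr η ∈ plevel p (ℓ + idx n2 q - idx n2 p)) ∧
  (∀ η₁ ∈ q.dom, ∀ η₂ ∈ q.dom, (q.tlt η₁ η₂ ∨ η₁ = η₂) →
    (p.tlt (pr η₁) (pr η₂) ∨ pr η₁ = pr η₂)) ∧
  (∀ η ∈ q.dom, p.bval (pr η) ≤ q.bval η) ∧
  (∀ η ∈ q.dom, pfsub (pr η) η) ∧
  (∀ ℓ, ∀ ν ∈ plevel q ℓ, ∀ ρ ∈ plevel q (ℓ + 1), pfsub ν ρ →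
    pdom (pr ρ) ∩ pdom ν = pdom (pr ν))

/-- The order `≤_Q`. -/
def QLE (n2 : ℕ → ℕ) (p q : QCond) : Prop :=
  idx n2 p ≤ idx n2 q ∧ ∃ pr, Proj n2 p q pr

/-- The partial orders `≤_n`. -/
def QLEn (T : ATree) (n1 n2 n3 : ℕ → ℕ) (f : ℕ → ℕ → ℝ) (n : ℕ) (p q : QCond) : Prop :=
  QLE n2 p q ∧ idx n2 p = idx n2 q ∧
  (∀ ℓ, ℓ ≤ n → plevel p ℓ = plevel q ℓ) ∧
  (∀ ℓ, ℓ ≤ n → ∀ η ∈ plevel p ℓ, p.bval η = q.bval η) ∧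
  ∀ pr, Proj n2 p q pr → ∀ η ∈ q.dom,
    (pr η = η ∧ sucSet q η = sucSet p η ∧ q.bval η = p.bval η) ∨
    (n : ℝ) ≤ pnorm T n1 n2 n3 f q η

/-- `p` is smooth. -/
def SmoothQ (T : ATree) (p : QCond) : Prop :=
  ∃ α, α < omega1 ∧ ∀ b : ℕ → PF, OBranch p b → (⋃ ℓ, pdom (b ℓ)) = below T α

/-- `p` is weakly smooth, witnessed by `α` and `u`. -/
def WSmoothW (T : ATree) (p : QCond) (α : Ordinal) (u : Set Ordinal) : Prop :=
  α < omega1 ∧ u.Finite ∧ u ⊆ T.mem \ below T α ∧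
  ∀ b : ℕ → PF, OBranch p b → (⋃ ℓ, pdom (b ℓ)) \ u = below T α

/-- `p^⟨η⟩`: the restriction of `p` to the nodes extending `η`. -/
def restr (p : QCond) (η : PF) : QCond :=
  ⟨{ρ | ρ ∈ p.dom ∧ pfsub η ρ},
   fun x y => p.tlt x y ∧ (x ∈ p.dom ∧ pfsub η x) ∧ (y ∈ p.dom ∧ pfsub η y),
   p.bval⟩

/-- A front of `p^[]`. -/
def Front (p : QCond) (F : Set PF) : Prop :=
  F ⊆ p.dom ∧
  (∀ x ∈ F, ∀ y ∈ F, x ≠ y → ¬ p.tlt x y ∧ ¬ p.tlt y x) ∧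
  ∀ b : ℕ → PF, OBranch p b → ∃ ℓ, b ℓ ∈ F

/-- Two conditions are compatible iff they have a common extension in `Q`. -/
def Compat (T : ATree) (n1 n2 n3 : ℕ → ℕ) (f : ℕ → ℕ → ℝ) (r s : QCond) : Prop :=
  ∃ t, InQ T n1 n2 n3 f t ∧ QLE n2 r t ∧ QLE n2 s t

/-- `A` is predense above `p`. -/
def Predense (T : ATree) (n1 n2 n3 : ℕ → ℕ) (f : ℕ → ℕ → ℝ) (A : Set QCond) (p : QCond) : Prop :=
  ∀ r, InQ T n1 n2 n3 f r → QLE n2 p r → ∃ s ∈ A, Compat T n1 n2 n3 f s r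

/-- Equality of conditions as forcing conditions (their data agree on their domains). -/
def QEquiv (p q : QCond) : Prop :=
  p.dom = q.dom ∧ (∀ η ∈ p.dom, p.bval η = q.bval η) ∧
  ∀ x ∈ p.dom, ∀ y ∈ p.dom, (p.tlt x y ↔ q.tlt x y)

end

/-- clause (d) follows from the remaining clauses of the definition of a
simple `i`-creature together with `norm⁰(c) > 0`; hence `c` is a simple `i`-creature. -/
theorem stmt0 (T : ATree) (n1 n2 n3 : ℕ → ℕ) (hseq : SeqOK n1 n2 n3)
    (i : ℕ) (base : PF) (R : Set PF)
    (hb : BaseOK T n2 n3 i base) (hv : ValOK T n1 n2 n3 i base R)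
    (hn : 0 < norm0 T n2 n3 i base R) :
    ClauseD base R ∧ SCr T n1 n2 n3 i base R := by
  -- First extract some k > 0 with Norm0P
  have hk : ∃ k, Norm0P T n2 n3 i base R k ∧ 0 < k := by
    by_contra h
    push_neg at h
    have hub : (0 : ℕ) ∈ upperBounds {k | Norm0P T n2 n3 i base R k} := by
      intro k hkS
      exact Nat.le_of_not_lt (fun hk0 => absurd hk0 (not_lt.mpr (h k hkS)))
    have : norm0 T n2 n3 i base R ≤ 0 := csSup_le' hub
    omega
  obtain ⟨k, hkP, hk0⟩ := hk
  have hd : ClauseD base R := by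
    intro η₁ hη₁ x hx hxb
    -- get the value of η₁ at x
    obtain ⟨v₁, hv₁⟩ : ∃ v, η₁ x = some v := by
      cases hval : η₁ x with
      | none => exact absurd hval hx
      | some v => exact ⟨v, rfl⟩
    -- x is in T.mem
    have hxmem : x ∈ T.mem := (hv.2.2.1 η₁ hη₁).1.1 hx
    -- find a branch containing x
    have hchain : IsChain T.lt ({x} : Set Ordinal) := by
      simp [IsChain, Set.Pairwise]
    obtain ⟨M, hM, hxM⟩ := hchain.exists_maxChain
    have hMmem : M ⊆ T.mem := by
      intro y hy
      rcases eq_or_ne y x with rfl | hne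
      · exact hxmem
      · rcases hM.1 hy (hxM rfl) hne with h | h
        · exact (T.lt_mem h).1
        · exact (T.lt_mem h).2
    have hBr : Branch T M := by
      refine ⟨hMmem, hM.1, fun C hMC hCmem hCchain => hM.2 hCchain hMC⟩
    -- v₁ < n3 i
    have hv₁lt : v₁ < n3 i := (hv.2.2.1 η₁ hη₁).1.2.2.1 x v₁ hv₁
    -- apply Norm0P with a = {v₁} and all branches = M
    obtain ⟨η₂, hη₂R, hcond, _⟩ :=
      hkP {v₁} (by intro v hv'; simp at hv'; subst hv'; exact hv₁lt)
        (by simp; omega) (fun _ => M) (fun _ => hBr)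
    refine ⟨η₂, hη₂R, ?_⟩
    intro w₁ w₂ hw₁ hw₂
    have hxdom : x ∈ pdom η₂ := by
      intro hnone
      rw [hw₂] at hnone
      exact Option.some_ne_none _ hnone
    have := hcond x ⟨⟨0, hk0⟩, hxM rfl⟩ hxdom hxb w₂ hw₂
    simp at this
    rw [hv₁] at hw₁
    injection hw₁ with hw₁'
    subst hw₁'
    exact fun h => this h.symm
  exact ⟨hd, hb, hv, hd⟩
end

section
/- (2-bigness for creatures.) If c⁺ = (c, k(c⁺)) is an i-creature with norm(c⁺) ≥ k+1, and c₁⁺ = (c₁, k(c₁⁺)), c₂⁺ = (c₂, k(c₂⁺)) are i-creatures such that val(c) = val(c₁) ∪ val(c₂) and k(c₁⁺) = k(c₂⁺) = k(c⁺), then norm(c₁⁺) ≥ k or norm(c₂⁺) ≥ k. -/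
open Classical Set

/-- `Norm0P` holds at `0` whenever `R` is nonempty and all domains are small. -/
lemma norm0P_zero' (T : ATree) (n2 n3 : ℕ → ℕ) (i : ℕ) (b : PF) (R : Set PF)
    (hne : R.Nonempty) (hcard : ∀ η ∈ R, (pdom η).ncard < n2 i) :
    Norm0P T n2 n3 i b R 0 := by
  intro a _ _ B _
  obtain ⟨η, hη⟩ := hne
  exact ⟨η, hη, fun x hx => (hx.choose).elim0, by simpa using (hcard η hη).le⟩

/-- `Norm0P` is downward closed in `k` (for positive `k'`). -/
lemma norm0P_mono_k (T : ATree) (n2 n3 : ℕ → ℕ) (i : ℕ) (b : PF) (R : Set PF)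
    {k k' : ℕ} (hk' : 1 ≤ k') (hkk : k' ≤ k)
    (h : Norm0P T n2 n3 i b R k) : Norm0P T n2 n3 i b R k' := by
  intro a ha hcard B hB
  obtain ⟨η, hηR, hα, hd⟩ := h a ha (hcard.trans hkk)
    (fun l => B ⟨(l : ℕ) % k', Nat.mod_lt _ hk'⟩) (fun l => hB _)
  refine ⟨η, hηR, ?_, le_trans (Nat.mul_le_mul_left _
    (Nat.pow_le_pow_right (by norm_num) hkk)) hd⟩
  intro x hx hx1 hx2 v hv
  obtain ⟨l, hxl⟩ := hx
  refine hα x ⟨⟨(l : ℕ), lt_of_lt_of_le l.isLt hkk⟩, ?_⟩ hx1 hx2 v hv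
  simpa [Nat.mod_eq_of_lt l.isLt] using hxl

/-- `Norm0P` is monotone in `R`. -/
lemma norm0P_mono_R (T : ATree) (n2 n3 : ℕ → ℕ) (i : ℕ) (b : PF) {R R' : Set PF}
    (hsub : R' ⊆ R) {k : ℕ} (h : Norm0P T n2 n3 i b R' k) : Norm0P T n2 n3 i b R k := by
  intro a ha hcard B hB
  obtain ⟨η, hηR, hrest⟩ := h a ha hcard B hB
  exact ⟨η, hsub hηR, hrest⟩

/-- If `norm0` is positive, then its defining set is bounded and contains it. -/
lemma norm0P_self (T : ATree) (n2 n3 : ℕ → ℕ) (i : ℕ) (b : PF) (R : Set PF)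
    (h : 1 ≤ norm0 T n2 n3 i b R) :
    Norm0P T n2 n3 i b R (norm0 T n2 n3 i b R) ∧
      BddAbove {k | Norm0P T n2 n3 i b R k} := by
  have h' : 1 ≤ sSup {k | Norm0P T n2 n3 i b R k} := h
  have hbdd : BddAbove {k | Norm0P T n2 n3 i b R k} := by
    by_contra hb
    rw [csSup_of_not_bddAbove hb, csSup_empty] at h'
    simp at h'
  have hne : {k | Norm0P T n2 n3 i b R k}.Nonempty := by
    by_contra hb
    rw [Set.not_nonempty_iff_eq_empty.1 hb, csSup_empty] at h'
    simp at h'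
  exact ⟨Nat.sSup_mem hne hbdd, hbdd⟩

/-- The key splitting property of `Norm0P`. -/
lemma norm0P_split (T : ATree) (n2 n3 : ℕ → ℕ) (i m : ℕ) (b : PF) (R R1 R2 : Set PF)
    (hsub : R ⊆ R1 ∪ R2) (hm : 1 ≤ m)
    (hbig : Norm0P T n2 n3 i b R (2 * m)) :
    Norm0P T n2 n3 i b R1 m ∨ Norm0P T n2 n3 i b R2 m := by
  by_contra hcon
  push_neg at hcon
  obtain ⟨hn1, hn2⟩ := hcon
  unfold Norm0P at hn1 hn2
  push_neg at hn1 hn2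
  obtain ⟨a1, ha1, hc1, B1, hB1, hw1⟩ := hn1
  obtain ⟨a2, ha2, hc2, B2, hB2, hw2⟩ := hn2
  obtain ⟨η, hηR, hα, hd⟩ := hbig (a1 ∪ a2)
    (fun v hv => by
      rcases Finset.mem_union.1 hv with h | h
      exacts [ha1 v h, ha2 v h])
    (le_trans (Finset.card_union_le _ _) (by omega))
    (fun l => if h : (l : ℕ) < m then B1 ⟨(l : ℕ), h⟩
      else B2 ⟨(l : ℕ) - m, by have := l.isLt; omega⟩)
    (fun l => by split
                 · exact hB1 _
                 · exact hB2 _)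
  have hdpow : ∀ k' ≤ 2 * m, (pdom η).ncard * 2 ^ k' ≤ n2 i := fun k' hk' =>
    le_trans (Nat.mul_le_mul_left _ (Nat.pow_le_pow_right (by norm_num) hk')) hd
  rcases hsub hηR with h | h
  · refine absurd (hw1 η h ?_) (not_lt.2 (hdpow m (by omega)))
    intro x hx hx1 hx2 v hv hva
    obtain ⟨l, hxl⟩ := hx
    refine hα x ⟨⟨(l : ℕ), by have := l.isLt; omega⟩, ?_⟩ hx1 hx2 v hv
      (Finset.mem_union_left _ hva)
    simpa [l.isLt] using hxl
  · refine absurd (hw2 η h ?_) (not_lt.2 (hdpow m (by omega)))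
    intro x hx hx1 hx2 v hv hva
    obtain ⟨l, hxl⟩ := hx
    refine hα x ⟨⟨m + (l : ℕ), by have := l.isLt; omega⟩, ?_⟩ hx1 hx2 v hv
      (Finset.mem_union_right _ hva)
    simpa using hxl

/-- `normStar` is antitone in `R`. -/
lemma normStar_anti (n1 : ℕ → ℕ) (i : ℕ) {R R' : Set PF}
    (hsub : R' ⊆ R) (hfin : R.Finite) (hne : R'.Nonempty) :
    normStar n1 i R ≤ normStar n1 i R' := by
  rcases Nat.eq_zero_or_pos (n1 i) with h0 | h0
  · simp [normStar, log2c, h0]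
  have hR' : 0 < (R'.ncard : ℝ) := by
    exact_mod_cast (Set.ncard_pos (hfin.subset hsub)).2 hne
  have hle : (R'.ncard : ℝ) ≤ R.ncard := by
    exact_mod_cast Set.ncard_le_ncard hsub hfin
  have hn1 : 0 < (n1 i : ℝ) := by exact_mod_cast h0
  have hRcard : 0 < (R.ncard : ℝ) := lt_of_lt_of_le hR' hle
  apply Nat.ceil_mono
  rw [Real.logb_le_logb (by norm_num) (div_pos hn1 hRcard) (div_pos hn1 hR')]
  exact div_le_div_of_nonneg_left hn1.le hR' hle

/-- 2-bigness for creatures. -/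
theorem stmt5 (T : ATree) (n1 n2 n3 : ℕ → ℕ) (hseq : SeqOK n1 n2 n3)
    (f : ℕ → ℕ → ℝ) (hf : FOK f)
    (i k : ℕ) (kc : ℕ) (b b1 b2 : PF) (R R1 R2 : Set PF)
    (hc : SCr T n1 n2 n3 i b R)
    (hc1 : SCr T n1 n2 n3 i b1 R1)
    (hc2 : SCr T n1 n2 n3 i b2 R2)
    (hval : ({b} ×ˢ R : Set (PF × PF)) = ({b1} ×ˢ R1) ∪ ({b2} ×ˢ R2))
    (hnorm : (k : ℝ) + 1 ≤ f (normHalf T n1 n2 n3 i b R) kc) :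
    (k : ℝ) ≤ f (normHalf T n1 n2 n3 i b1 R1) kc ∨
    (k : ℝ) ≤ f (normHalf T n1 n2 n3 i b2 R2) kc := by
  obtain ⟨hfpos, hfmono, hfhalf, hf4, _⟩ := hf
  -- identify the bases and ranges
  obtain ⟨η1, hη1⟩ := hc1.2.1.1
  obtain ⟨η2, hη2⟩ := hc2.2.1.1
  have hmem1 : (b1, η1) ∈ ({b} ×ˢ R : Set (PF × PF)) := by
    rw [hval]; exact Or.inl (by simp [hη1])
  have hmem2 : (b2, η2) ∈ ({b} ×ˢ R : Set (PF × PF)) := by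
    rw [hval]; exact Or.inr (by simp [hη2])
  have hb1 : b1 = b := by simpa using hmem1.1
  have hb2 : b2 = b := by simpa using hmem2.1
  rw [hb1] at hval hc1 ⊢
  rw [hb2] at hval hc2 ⊢
  have hsub1 : R1 ⊆ R := by
    intro η hη
    have : (b, η) ∈ ({b} ×ˢ R : Set (PF × PF)) := by
      rw [hval]; exact Or.inl (by simp [hη])
    simpa using this.2
  have hsub2 : R2 ⊆ R := by
    intro η hη
    have : (b, η) ∈ ({b} ×ˢ R : Set (PF × PF)) := by
      rw [hval]; exact Or.inr (by simp [hη])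
    simpa using this.2
  have hsub : R ⊆ R1 ∪ R2 := by
    intro η hη
    have : (b, η) ∈ ({b} ×ˢ R1 : Set (PF × PF)) ∪ ({b} ×ˢ R2) := by
      rw [← hval]; simp [hη]
    rcases this with h | h
    · exact Or.inl (by simpa using h.2)
    · exact Or.inr (by simpa using h.2)
  set n0 := normHalf T n1 n2 n3 i b R with hn0
  -- n0 ≥ 1
  have hn0pos : 1 ≤ n0 := by
    by_contra hcontra
    have hz : n0 = 0 := by omega
    rw [hz] at hnorm
    rw [hf4 0 kc (Nat.zero_le _)] at hnorm
    have : (0 : ℝ) ≤ (k : ℝ) := Nat.cast_nonneg k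
    linarith
  set m := n0 / 2 with hm
  have hkstep : (k : ℝ) ≤ f m kc := by
    have := hfhalf n0 kc
    linarith
  by_cases hmkc : m ≤ kc
  · left
    rw [hf4 m kc hmkc] at hkstep
    exact hkstep.trans (hfpos _ _)
  -- now kc < m, in particular 1 ≤ m
  have hm1 : 1 ≤ m := by omega
  have hnorm0R : n0 ≤ norm0 T n2 n3 i b R := min_le_left _ _
  have hnormStarR : n0 ≤ normStar n1 i R := min_le_right _ _
  obtain ⟨hPself, hbdd⟩ := norm0P_self T n2 n3 i b R (le_trans hn0pos hnorm0R)
  have hP2m : Norm0P T n2 n3 i b R (2 * m) :=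
    norm0P_mono_k T n2 n3 i b R (by omega)
      (le_trans (by omega) hnorm0R) hPself
  have hfinR : R.Finite := hc.2.1.2.1
  -- normStar bounds
  have hstar1 : m ≤ normStar n1 i R1 :=
    le_trans (by omega) (le_trans hnormStarR (normStar_anti n1 i hsub1 hfinR ⟨η1, hη1⟩))
  have hstar2 : m ≤ normStar n1 i R2 :=
    le_trans (by omega) (le_trans hnormStarR (normStar_anti n1 i hsub2 hfinR ⟨η2, hη2⟩))
  -- from a Norm0P bound to the conclusion
  have key : ∀ (R' : Set PF), R' ⊆ R → Norm0P T n2 n3 i b R' m →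
      m ≤ normStar n1 i R' → (k : ℝ) ≤ f (normHalf T n1 n2 n3 i b R') kc := by
    intro R' hsub' hP hstar
    have hbdd' : BddAbove {j | Norm0P T n2 n3 i b R' j} :=
      hbdd.mono (fun j hj => norm0P_mono_R T n2 n3 i b hsub' hj)
    have hn0' : m ≤ norm0 T n2 n3 i b R' := le_csSup hbdd' hP
    have hhalf : m ≤ normHalf T n1 n2 n3 i b R' := le_min hn0' hstar
    have := hfmono (normHalf T n1 n2 n3 i b R') m kc kc hhalf (by omega) le_rfl
    linarith
  rcases norm0P_split T n2 n3 i m b R R1 R2 hsub hm1 hP2m with hP1 | hP2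
  · exact Or.inl (key R1 hsub1 hP1 hstar1)
  · exact Or.inr (key R2 hsub2 hP2 hstar2)
end
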